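/- arXiv:1510.08739 — 2 statements merged into one kernel-verified Lean document; each statement's English description precedes it below -/
import Mathlib

section
/- Let A ⊆ 𝔽₂ⁿ, W ≤ 𝔽₂ⁿ a subspace, d, r₀ ≥ 1 integers, and x₁,…,x_d ∈ 𝔽₂ⁿ with linearly independent images mod W. Suppose there is j ∈ {0,…,r₀} such that for every nonempty I ⊆ [d], the density of A on the coset (∑_{i∈I} x_i) + W lies in [j/r₀, (j+1)/r₀). Set V = W + ⟨x₁,…,x_d⟩. Then for every r ∈ W^⊥ \ V^⊥, |(1_A μ_V)^∧(r)| ≤ 2^{-d} + 1/r₀. -/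
open scoped Classical
open Finset
noncomputable section

/-- Dot product on `𝔽₂ⁿ`. -/
def dot2 {n : ℕ} (r x : Fin n → ZMod 2) : ZMod 2 := ∑ i, r i * x i

/-- The additive character `t ↦ (-1)^t` of `𝔽₂`. -/
def chi2 (t : ZMod 2) : ℂ := (-1 : ℂ) ^ t.val

/-- `(1_A μ_{x+W})^∧(r) = |W|⁻¹ ∑_{w ∈ W} 1_A(x+w) (-1)^{r·(x+w)}`. -/
def fcoset2 {n : ℕ} (A : Set (Fin n → ZMod 2)) (x : Fin n → ZMod 2)
    (W : Submodule (ZMod 2) (Fin n → ZMod 2)) (r : Fin n → ZMod 2) : ℂ :=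
  (∑ w : W, if x + (w : Fin n → ZMod 2) ∈ A then
      chi2 (dot2 r (x + (w : Fin n → ZMod 2))) else 0) / (Fintype.card W)

/-- The density `𝔼_{x+W} 1_A` of `A` on the coset `x + W`. -/
def dens2 {n : ℕ} (A : Set (Fin n → ZMod 2)) (x : Fin n → ZMod 2)
    (W : Submodule (ZMod 2) (Fin n → ZMod 2)) : ℝ :=
  (∑ w : W, if x + (w : Fin n → ZMod 2) ∈ A then (1 : ℝ) else 0) / (Fintype.card W)

lemma chi2_zero : chi2 0 = 1 := by simp [chi2]
lemma chi2_add (a b : ZMod 2) : chi2 (a + b) = chi2 a * chi2 b := by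
  unfold chi2
  rw [← pow_add, neg_one_pow_eq_pow_mod_two, neg_one_pow_eq_pow_mod_two (n := a.val + b.val)]
  congr 1; revert a b; decide
lemma chi2_one : chi2 1 = -1 := by
  norm_num [chi2, show ZMod.val (1 : ZMod 2) = 1 from rfl]
lemma abs_chi2 (a : ZMod 2) : ‖chi2 a‖ = 1 := by
  fin_cases a <;> simp [chi2]
lemma dot2_add {n : ℕ} (r a b : Fin n → ZMod 2) : dot2 r (a + b) = dot2 r a + dot2 r b := by
  simp [dot2, mul_add, Finset.sum_add_distrib]
lemma dot2_smul {n : ℕ} (r : Fin n → ZMod 2) (c : ZMod 2) (v : Fin n → ZMod 2) :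
    dot2 r (c • v) = c * dot2 r v := by
  simp [dot2, Finset.mul_sum, mul_left_comm]
lemma dot2_sum {n : ℕ} (r : Fin n → ZMod 2) {ι : Type*} (s : Finset ι) (f : ι → Fin n → ZMod 2) :
    dot2 r (∑ i ∈ s, f i) = ∑ i ∈ s, dot2 r (f i) := by
  classical
  induction s using Finset.induction with
  | empty => simp [dot2]
  | insert _ _ h ih => simp [Finset.sum_insert h, dot2_add, ih]

lemma dens2_nonneg {n : ℕ} (A : Set (Fin n → ZMod 2)) (x : Fin n → ZMod 2)
    (W : Submodule (ZMod 2) (Fin n → ZMod 2)) : 0 ≤ dens2 A x W := by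
  apply div_nonneg _ (by positivity)
  apply Finset.sum_nonneg; intro w _; split <;> norm_num

lemma dens2_le_one {n : ℕ} (A : Set (Fin n → ZMod 2)) (x : Fin n → ZMod 2)
    (W : Submodule (ZMod 2) (Fin n → ZMod 2)) : dens2 A x W ≤ 1 := by
  rw [dens2, div_le_one (by positivity)]
  calc (∑ w : W, if x + (w : Fin n → ZMod 2) ∈ A then (1:ℝ) else 0)
      ≤ ∑ _w : W, (1:ℝ) := by
        apply Finset.sum_le_sum; intro w _; split <;> norm_num
    _ = Fintype.card W := by simp


set_option maxHeartbeats 1600000 in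
/-- if the density of `A` on every coset `(∑_{i∈I} xᵢ) + W`
(`I ≠ ∅`) lies in a common window `[j/r₀, (j+1)/r₀)`, then for
`V = W + ⟨x₁,…,x_d⟩` and every `r ∈ W^⊥ \ V^⊥` we have
`|(1_A μ_V)^∧(r)| ≤ 2^{-d} + 1/r₀`. -/
theorem uniformity_inside_W_perp {n d r₀ : ℕ} (hd : 1 ≤ d) (hr₀ : 1 ≤ r₀)
    (A : Set (Fin n → ZMod 2)) (W : Submodule (ZMod 2) (Fin n → ZMod 2))
    (x : Fin d → (Fin n → ZMod 2))
    (hx : LinearIndependent (ZMod 2) fun i => Submodule.Quotient.mk (p := W) (x i))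
    (j : ℕ) (hj : j ≤ r₀)
    (hdens : ∀ I : Finset (Fin d), I.Nonempty →
      (j : ℝ) / r₀ ≤ dens2 A (∑ i ∈ I, x i) W ∧
      dens2 A (∑ i ∈ I, x i) W < ((j : ℝ) + 1) / r₀)
    (V : Submodule (ZMod 2) (Fin n → ZMod 2))
    (hV : V = W ⊔ Submodule.span (ZMod 2) (Set.range x)) :
    ∀ r : Fin n → ZMod 2, (∀ w ∈ W, dot2 r w = 0) → (∃ v ∈ V, dot2 r v ≠ 0) →
      ‖fcoset2 A 0 V r‖ ≤ ((2 : ℝ) ^ d)⁻¹ + 1 / r₀ := by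
  intro r hrW hrV
  set xc : (Fin d → ZMod 2) → (Fin n → ZMod 2) := fun c => ∑ i, c i • x i with hxc
  have hxcadd : ∀ c c', xc (c + c') = xc c + xc c' := by
    intro c c'
    simp [hxc, add_smul, Finset.sum_add_distrib]
  have hxcV : ∀ c, xc c ∈ V := by
    intro c
    rw [hV]
    apply Submodule.sum_mem
    intro i _
    exact Submodule.mem_sup_right (Submodule.smul_mem _ _
      (Submodule.subset_span (Set.mem_range_self i)))
  -- the parametrization of V
  set f : (Fin d → ZMod 2) × W → V := fun p => ⟨xc p.1 + (p.2 : Fin n → ZMod 2),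
    V.add_mem (hxcV p.1) (by rw [hV]; exact Submodule.mem_sup_left p.2.2)⟩ with hf
  have hneg : ∀ y : Fin n → ZMod 2, -y = y := by
    intro y; funext k
    show -(y k) = y k
    generalize y k = a; revert a; decide
  have hinj : Function.Injective f := by
    intro ⟨c, w⟩ ⟨c', w'⟩ h
    have h1 : xc c + (w : Fin n → ZMod 2) = xc c' + w' := congrArg Subtype.val h
    have hcc : c = c' := by
      have hq : ∀ g : Fin d → ZMod 2,
          Submodule.Quotient.mk (p := W) (xc g) = ∑ i, g i • Submodule.Quotient.mk (p := W) (x i) := by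
        intro g
        simp only [hxc, ← Submodule.mkQ_apply, map_sum, map_smul]
      have h2 : xc c + xc c' = (w' : Fin n → ZMod 2) - w := by
        have h3 : xc c - xc c' = (w' : Fin n → ZMod 2) - w := by
          rw [sub_eq_sub_iff_add_eq_add, h1, add_comm]
        rw [← h3, sub_eq_add_neg, hneg]
      have hmem : xc (c + c') ∈ W := by
        rw [hxcadd, h2]; exact sub_mem w'.2 w.2
      have hz : Submodule.Quotient.mk (p := W) (xc (c + c')) = 0 :=
        (Submodule.Quotient.mk_eq_zero W).mpr hmem
      rw [hq] at hz
      have hall := (Fintype.linearIndependent_iff.mp hx) (c + c') hz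
      funext i
      have h4 : c i + c' i = 0 := hall i
      revert h4
      generalize c i = a; generalize c' i = b
      revert a b; decide
    subst hcc
    exact Prod.ext rfl (Subtype.ext (add_left_cancel h1))
  have hsurj : Function.Surjective f := by
    rintro ⟨v, hv⟩
    rw [hV] at hv
    obtain ⟨w, hw, s, hs, rfl⟩ := Submodule.mem_sup.mp hv
    obtain ⟨c, rfl⟩ := (Submodule.mem_span_range_iff_exists_fun (ZMod 2)).mp hs
    exact ⟨(c, ⟨w, hw⟩), Subtype.ext (add_comm _ _)⟩
  have hbij : Function.Bijective f := ⟨hinj, hsurj⟩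
  have hW0 : (Fintype.card W : ℝ) ≠ 0 := Nat.cast_ne_zero.mpr Fintype.card_ne_zero
  have hW0' : (Fintype.card W : ℂ) ≠ 0 := Nat.cast_ne_zero.mpr Fintype.card_ne_zero
  have hcardV : (Fintype.card V : ℂ) = (2:ℂ)^d * (Fintype.card W : ℂ) := by
    rw [← Fintype.card_of_bijective hbij, Fintype.card_prod, Fintype.card_fun]
    push_cast
    norm_num [ZMod.card]
  set t : (Fin d → ZMod 2) → ZMod 2 := fun c => dot2 r (xc c) with ht
  set D : (Fin d → ZMod 2) → ℝ := fun c => dens2 A (xc c) W with hD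
  set F : V → ℂ := fun v => if (0:Fin n → ZMod 2) + (v : Fin n → ZMod 2) ∈ A then
    chi2 (dot2 r ((0:Fin n → ZMod 2) + (v : Fin n → ZMod 2))) else 0 with hFdef
  have hfc : fcoset2 A 0 V r = (∑ v : V, F v) / (Fintype.card V) := rfl
  have hstep1 : (∑ v : V, F v)
      = ∑ c, chi2 (t c) * ((((Fintype.card W : ℝ) * D c : ℝ)) : ℂ) := by
    have h1 : (∑ p : (Fin d → ZMod 2) × W, F (f p)) = ∑ v : V, F v :=
      Fintype.sum_bijective f hbij _ _ (fun p => rfl)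
    rw [← h1, Fintype.sum_prod_type]
    refine Finset.sum_congr rfl (fun c _ => ?_)
    have hin : ∀ w : W, F (f (c, w)) =
        chi2 (t c) * (if xc c + (w : Fin n → ZMod 2) ∈ A then (1:ℂ) else 0) := by
      intro w
      show (if (0:Fin n→ZMod 2) + (xc c + (w:Fin n→ZMod 2)) ∈ A then
        chi2 (dot2 r ((0:Fin n→ZMod 2)+(xc c + (w:Fin n→ZMod 2)))) else 0) = _
      rw [zero_add]
      have hdt : dot2 r (xc c + (w : Fin n → ZMod 2)) = t c := by
        rw [dot2_add, hrW _ w.2, add_zero, ht]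
      rw [hdt]
      split <;> simp
    rw [Finset.sum_congr rfl (fun w _ => hin w), ← Finset.mul_sum]
    congr 1
    have hD' : (Fintype.card W : ℝ) * D c
        = ∑ w : W, if xc c + (w:Fin n→ZMod 2) ∈ A then (1:ℝ) else 0 := by
      rw [hD]
      exact mul_div_cancel₀ _ hW0
    rw [hD']
    push_cast [apply_ite (Complex.ofReal)]
    rfl
  have hkey : fcoset2 A 0 V r = (∑ c, chi2 (t c) * (D c : ℂ)) / (2:ℂ)^d := by
    rw [hfc, hstep1, hcardV]
    have : ∀ c, chi2 (t c) * ((((Fintype.card W : ℝ) * D c : ℝ)) : ℂ)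
        = (Fintype.card W : ℂ) * (chi2 (t c) * (D c : ℂ)) := by
      intro c; push_cast; ring
    rw [Finset.sum_congr rfl (fun c _ => this c), ← Finset.mul_sum]
    field_simp
  have hi0 : ∃ i₀, dot2 r (x i₀) = 1 := by
    obtain ⟨v, hvV, hrv⟩ := hrV
    rw [hV] at hvV
    obtain ⟨w, hw, s, hs, rfl⟩ := Submodule.mem_sup.mp hvV
    obtain ⟨c, rfl⟩ := (Submodule.mem_span_range_iff_exists_fun (ZMod 2)).mp hs
    by_contra hno
    push_neg at hno
    apply hrv
    rw [dot2_add, hrW w hw, zero_add, dot2_sum]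
    apply Finset.sum_eq_zero
    intro i _
    rw [dot2_smul]
    have h0 : dot2 r (x i) = 0 := by
      have h := hno i
      revert h
      generalize dot2 r (x i) = a
      revert a; decide
    rw [h0, mul_zero]
  obtain ⟨i₀, hi₀⟩ := hi0
  have hxcu : xc (Pi.single i₀ 1) = x i₀ := by
    have hg : ∀ g : Fin d → ZMod 2, xc g = ∑ i, g i • x i := fun g => rfl
    rw [hg]
    rw [Finset.sum_eq_single i₀]
    · rw [Pi.single_eq_same, one_smul]
    · intro i _ hne; rw [Pi.single_eq_of_ne hne, zero_smul]
    · intro h; exact absurd (Finset.mem_univ i₀) h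
  have ht_shift : ∀ c, t (c + Pi.single i₀ 1) = t c + 1 := by
    intro c
    show dot2 r (xc (c + Pi.single i₀ 1)) = dot2 r (xc c) + 1
    rw [hxcadd, dot2_add, hxcu, hi₀]
  have ht0 : t 0 = 0 := by
    show dot2 r (xc 0) = 0
    have h0 : xc 0 = 0 := by rw [hxc]; simp
    rw [h0]; simp [dot2]
  have hS0 : (∑ c, chi2 (t c)) = 0 := by
    have h1 : (∑ c : Fin d → ZMod 2, chi2 (t (c + Pi.single i₀ (1:ZMod 2)))) = ∑ c, chi2 (t c) :=
      Fintype.sum_equiv (Equiv.addRight (Pi.single i₀ 1)) _ _ (fun c => rfl)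
    have h2 : (∑ c : Fin d → ZMod 2, chi2 (t (c + Pi.single i₀ (1:ZMod 2)))) = - ∑ c, chi2 (t c) := by
      rw [Finset.sum_congr rfl
        (fun c _ => by rw [ht_shift c, chi2_add, chi2_one, mul_neg_one])]
      exact Finset.sum_neg_distrib _
    have h3 := h1.symm.trans h2
    linear_combination h3 / 2
  set S := ∑ c, chi2 (t c) * (D c : ℂ) with hSdef
  rw [hkey, norm_div, norm_pow, Complex.norm_two]
  set p : ℝ := (2:ℝ)^d with hp
  have hp1 : (1:ℝ) ≤ p := by
    rw [hp]
    exact_mod_cast Nat.one_le_two_pow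
  have hppos : (0:ℝ) < p := by positivity
  have hr1 : (1:ℝ) ≤ (r₀:ℝ) := by exact_mod_cast hr₀
  have hr0pos : (0:ℝ) < (r₀:ℝ) := by linarith
  have hcard_erase : ((univ.erase (0 : Fin d → ZMod 2)).card : ℝ) = p - 1 := by
    rw [Finset.card_erase_of_mem (Finset.mem_univ _), Finset.card_univ, Fintype.card_fun,
      ZMod.card, Fintype.card_fin]
    rw [Nat.cast_sub Nat.one_le_two_pow]
    push_cast
    rw [hp]
  have hDc : ∀ c ∈ univ.erase (0 : Fin d → ZMod 2),
      (j:ℝ)/r₀ ≤ D c ∧ D c < ((j:ℝ)+1)/r₀ := by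
    intro c hc
    have hc0 : c ≠ 0 := Finset.ne_of_mem_erase hc
    set I : Finset (Fin d) := univ.filter (fun i => c i = 1) with hI
    have hne : I.Nonempty := by
      obtain ⟨i, hi⟩ := Function.ne_iff.mp hc0
      refine ⟨i, ?_⟩
      rw [hI, Finset.mem_filter]
      refine ⟨Finset.mem_univ _, ?_⟩
      have hi' : c i ≠ 0 := hi
      revert hi'
      generalize c i = a
      revert a; decide
    have hIx : (∑ i ∈ I, x i) = xc c := by
      rw [hI, Finset.sum_filter, hxc]
      refine Finset.sum_congr rfl (fun i _ => ?_)
      by_cases h : c i = 1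
      · rw [if_pos h, h, one_smul]
      · rw [if_neg h]
        have h0 : c i = 0 := by revert h; generalize c i = a; revert a; decide
        rw [h0, zero_smul]
    have hd2 := hdens I hne
    rw [hIx] at hd2
    simpa [hD] using hd2
  have hsplit : S = ((D 0 - (j:ℝ)/r₀ : ℝ) : ℂ)
      + ∑ c ∈ univ.erase (0 : Fin d → ZMod 2), chi2 (t c) * ((D c - (j:ℝ)/r₀ : ℝ) : ℂ) := by
    have h1 : S = chi2 (t 0) * (D 0 : ℂ)
        + ∑ c ∈ univ.erase (0 : Fin d → ZMod 2), chi2 (t c) * (D c : ℂ) :=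
      (Finset.add_sum_erase univ _ (Finset.mem_univ 0)).symm
    have h2 : (∑ c ∈ univ.erase (0 : Fin d → ZMod 2), chi2 (t c)) = -1 := by
      have h := Finset.add_sum_erase univ (fun c => chi2 (t c))
        (Finset.mem_univ (0 : Fin d → ZMod 2))
      beta_reduce at h
      rw [ht0, chi2_zero, hS0] at h
      linear_combination h
    rw [h1, ht0, chi2_zero, one_mul]
    have h3 : (∑ c ∈ univ.erase (0 : Fin d → ZMod 2), chi2 (t c) * (D c : ℂ))
        = ∑ c ∈ univ.erase (0 : Fin d → ZMod 2),
          (chi2 (t c) * (((j:ℝ)/r₀ : ℝ) : ℂ) + chi2 (t c) * ((D c - (j:ℝ)/r₀ : ℝ):ℂ)) := by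
      refine Finset.sum_congr rfl (fun c _ => ?_)
      push_cast
      ring
    rw [h3, Finset.sum_add_distrib, ← Finset.sum_mul, h2]
    push_cast
    ring
  have hEbound : ‖(∑ c ∈ univ.erase (0:Fin d → ZMod 2),
      chi2 (t c) * ((D c - (j:ℝ)/r₀ : ℝ) : ℂ))‖ ≤ (p - 1) / r₀ := by
    calc ‖(∑ c ∈ univ.erase (0:Fin d → ZMod 2),
          chi2 (t c) * ((D c - (j:ℝ)/r₀ : ℝ) : ℂ))‖
        ≤ ∑ c ∈ univ.erase (0:Fin d → ZMod 2),
            ‖chi2 (t c) * ((D c - (j:ℝ)/r₀ : ℝ):ℂ)‖ :=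
          norm_sum_le _ _
      _ ≤ ∑ _c ∈ univ.erase (0:Fin d → ZMod 2), (1 / (r₀:ℝ)) := by
          apply Finset.sum_le_sum
          intro c hc
          rw [norm_mul, abs_chi2, one_mul, Complex.norm_real, Real.norm_eq_abs]
          obtain ⟨hlo, hhi⟩ := hDc c hc
          have hdiv : ((j:ℝ)+1)/r₀ = (j:ℝ)/r₀ + 1/r₀ := add_div _ _ _
          rw [abs_of_nonneg (by linarith)]
          linarith [hdiv ▸ hhi]
      _ = (p - 1)/r₀ := by
          rw [Finset.sum_const, nsmul_eq_mul, hcard_erase]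
          ring
  have hD0 : |D 0 - (j:ℝ)/r₀| ≤ 1 := by
    have hD0eq : D 0 = dens2 A (xc 0) W := rfl
    have h1 := dens2_nonneg A (xc 0) W
    have h2 := dens2_le_one A (xc 0) W
    have h3 : (0:ℝ) ≤ (j:ℝ)/r₀ := by positivity
    have h4 : (j:ℝ)/r₀ ≤ 1 := by
      rw [div_le_one hr0pos]
      exact_mod_cast hj
    rw [hD0eq, abs_le]
    constructor <;> linarith
  have hSbound : ‖S‖ ≤ 1 + (p - 1)/r₀ := by
    rw [hsplit]
    calc ‖_‖ ≤ ‖(((D 0 - (j:ℝ)/r₀ : ℝ):ℂ))‖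
          + ‖(∑ c ∈ univ.erase (0:Fin d → ZMod 2),
              chi2 (t c) * ((D c - (j:ℝ)/r₀ : ℝ) : ℂ))‖ := norm_add_le _ _
      _ ≤ 1 + (p-1)/r₀ := by
          rw [Complex.norm_real, Real.norm_eq_abs]
          exact add_le_add hD0 hEbound
  calc ‖S‖ / p ≤ (1 + (p-1)/(r₀:ℝ)) / p := by gcongr
    _ ≤ p⁻¹ + 1/(r₀:ℝ) := by
        rw [div_le_iff₀ hppos, add_mul, inv_mul_cancel₀ (ne_of_gt hppos)]
        have h5 : (p-1)/(r₀:ℝ) ≤ p/r₀ := by gcongr; linarith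
        have h6 : 1/(r₀:ℝ) * p = p/r₀ := by ring
        linarith
end
end

section
/- Over 𝔽₃, the conclusion of the main theorem fails quantitatively: there is an absolute constant c = √3/6 > 0 such that for every n there exists A ⊆ 𝔽₃ⁿ with the property that no subspace V ≤ 𝔽₃ⁿ of positive dimension makes A c-uniform on V; equivalently, for every positive-dimensional subspace V there exists r ∉ V^⊥ with |(1_A μ_V)^∧(r)| > √3/6 − δ for every δ > 0 (in fact ≥ √3/6). -/
open scoped Classical
open Finset
noncomputable section

/-- Dot product on `𝔽₃ⁿ`. -/
def dot3 {n : ℕ} (r x : Fin n → ZMod 3) : ZMod 3 := ∑ i, r i * x i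

/-- The additive character `t ↦ e^{-2πit/3}` of `𝔽₃`. -/
def chi3 (t : ZMod 3) : ℂ :=
  Complex.exp (-(2 * Real.pi * Complex.I) * (t.val : ℂ) / 3)

/-- `(1_A μ_V)^∧(r) = |V|⁻¹ ∑_{v ∈ V} 1_A(v) e^{-2πi (r·v)/3}`. -/
def fsub3 {n : ℕ} (A : Set (Fin n → ZMod 3))
    (V : Submodule (ZMod 3) (Fin n → ZMod 3)) (r : Fin n → ZMod 3) : ℂ :=
  (∑ v : V, if (v : Fin n → ZMod 3) ∈ A then
      chi3 (dot3 r (v : Fin n → ZMod 3)) else 0) / (Fintype.card V)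

lemma chi3_zero : chi3 0 = 1 := by
  simp [chi3]

lemma chi3_one_im : (chi3 1).im = -(Real.sqrt 3 / 2) := by
  have h : (-(2 * (Real.pi : ℂ) * Complex.I) * (((1 : ZMod 3).val : ℕ) : ℂ) / 3)
      = ((-(2 * Real.pi / 3) : ℝ) : ℂ) * Complex.I := by
    have : ((1 : ZMod 3).val : ℕ) = 1 := rfl
    rw [this]
    push_cast
    ring
  rw [chi3, h, Complex.exp_ofReal_mul_I_im, Real.sin_neg,
    show (2 * Real.pi / 3 : ℝ) = Real.pi - Real.pi / 3 by ring,
    Real.sin_pi_sub, Real.sin_pi_div_three]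

/-- Abstract key computation: if `P` holds whenever `c i = 1`, fails whenever
`c i = 2`, and the fibers of `c` are equidistributed, then the normalized
character sum has imaginary part exactly `-√3/6`. -/
lemma aux_key {ι : Type*} [Fintype ι] (c : ι → ZMod 3) (P : ι → Prop) [DecidablePred P]
    (h1 : ∀ i, c i = 1 → P i) (h2 : ∀ i, c i = 2 → ¬ P i)
    (hfib : ∀ a b : ZMod 3,
      (univ.filter fun i => c i = a).card = (univ.filter fun i => c i = b).card)
    (hpos : 0 < Fintype.card ι) :
    (∑ i, if P i then chi3 (c i) else 0).im / (Fintype.card ι : ℝ)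
      = -(Real.sqrt 3 / 6) := by
  set k := (univ.filter fun i => c i = 1).card with hk_def
  have hcard : Fintype.card ι = 3 * k := by
    have h1' : (univ : Finset ι).card =
        ∑ a : ZMod 3, (univ.filter fun i => c i = a).card :=
      Finset.card_eq_sum_card_fiberwise (fun x _ => mem_univ _)
    rw [Fintype.card, h1', Finset.sum_congr rfl (fun a _ => hfib a 1)]
    simp [Finset.sum_const, mul_comm]
    exact hk_def.symm
  have hkpos : 0 < k := by omega
  have hterm : ∀ i, (if P i then chi3 (c i) else 0).im
      = if c i = 1 then -(Real.sqrt 3 / 2) else 0 := by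
    intro i
    have hv3 : ∀ x : ZMod 3, x = 0 ∨ x = 1 ∨ x = 2 := by decide
    rcases hv3 (c i) with h | h | h
    · rw [h]
      by_cases hP : P i <;> simp [hP, h, chi3_zero]
    · rw [h, if_pos (h1 i h), if_pos rfl, chi3_one_im]
    · rw [h, if_neg (h2 i h), if_neg (by decide)]
      rfl
  rw [Complex.im_sum, Finset.sum_congr rfl (fun i _ => hterm i), ← Finset.sum_filter,
    Finset.sum_const, ← hk_def, nsmul_eq_mul, hcard]
  have hk' : (k : ℝ) ≠ 0 := Nat.cast_ne_zero.mpr hkpos.ne'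
  push_cast
  field_simp
  ring

/-- over `𝔽₃` the main theorem fails quantitatively: for every
`n` there is `A ⊆ 𝔽₃ⁿ` such that no positive-dimensional subspace `V` makes
`A` `(√3/6)`-uniform — indeed some `r ∉ V^⊥` has `|(1_A μ_V)^∧(r)| ≥ √3/6`. -/
theorem main_theorem_fails_over_F3 (n : ℕ) :
    ∃ A : Set (Fin n → ZMod 3),
      ∀ V : Submodule (ZMod 3) (Fin n → ZMod 3), 0 < Module.finrank (ZMod 3) V →
        ∃ r : Fin n → ZMod 3, (∃ v ∈ V, dot3 r v ≠ 0) ∧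
          Real.sqrt 3 / 6 ≤ ‖fsub3 A V r‖ := by
  set A : Set (Fin n → ZMod 3) :=
    {x | ∃ i : Fin n, (∀ j, j < i → x j = 0) ∧ x i = 1} with hA
  refine ⟨A, ?_⟩
  intro V hV
  -- a nonzero element of V
  have hVbot : V ≠ ⊥ := by
    intro h
    rw [h] at hV
    simp at hV
  obtain ⟨u0, hu0V, hu0⟩ := Submodule.exists_mem_ne_zero_of_ne_bot hVbot
  obtain ⟨i0, hi0⟩ : ∃ i, u0 i ≠ 0 := by
    by_contra h
    push_neg at h
    exact hu0 (funext h)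
  -- the minimal coordinate where V is supported
  set s : Finset (Fin n) := univ.filter (fun i => ∃ v ∈ V, v i ≠ 0) with hs_def
  have hs : s.Nonempty := ⟨i0, by
    simp only [hs_def, mem_filter, mem_univ, true_and]
    exact ⟨u0, hu0V, hi0⟩⟩
  set p := s.min' hs with hp_def
  obtain ⟨w, hwV, hwp⟩ : ∃ v ∈ V, v p ≠ 0 := by
    have := s.min'_mem hs
    simpa only [hs_def, mem_filter, mem_univ, true_and] using this
  have hlow : ∀ v ∈ V, ∀ j, j < p → v j = 0 := by
    intro v hv j hj
    by_contra h
    have hjs : j ∈ s := by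
      simp only [hs_def, mem_filter, mem_univ, true_and]
      exact ⟨v, hv, h⟩
    exact absurd (s.min'_le j hjs) (not_le.mpr hj)
  -- normalize to get u ∈ V with u p = 1
  set u : Fin n → ZMod 3 := (w p)⁻¹ • w with hu_def
  have huV : u ∈ V := V.smul_mem _ hwV
  have hup : u p = 1 := by
    simp only [hu_def, Pi.smul_apply, smul_eq_mul]
    exact inv_mul_cancel₀ hwp
  -- the frequency
  set r : Fin n → ZMod 3 := fun i => if i = p then 1 else 0 with hr_def
  have hdot : ∀ v : Fin n → ZMod 3, dot3 r v = v p := by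
    intro v
    simp [dot3, hr_def, ite_mul]
  refine ⟨r, ⟨u, huV, by rw [hdot, hup]; decide⟩, ?_⟩
  -- bound via the imaginary part
  refine le_trans ?_ (Complex.abs_im_le_norm _)
  suffices him : (fsub3 A V r).im = -(Real.sqrt 3 / 6) by
    rw [him, abs_neg, abs_of_nonneg (by positivity)]
  have hdiv : ∀ (z : ℂ) (N : ℕ), (z / (N : ℂ)).im = z.im / N := fun z N => by
    rw [show ((N : ℂ)) = ((N : ℝ) : ℂ) by push_cast; ring, Complex.div_ofReal_im]
  rw [fsub3, hdiv]
  simp only [hdot]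
  refine aux_key _ _ ?_ ?_ ?_ ?_
  · -- c v = 1 → membership in A
    intro v hv
    exact ⟨p, fun j hj => hlow _ v.2 j hj, hv⟩
  · -- c v = 2 → not in A
    rintro v hv ⟨i, hpre, hone⟩
    rcases lt_trichotomy i p with h1 | h1 | h1
    · rw [hlow _ v.2 i h1] at hone
      exact absurd hone (by decide)
    · rw [h1, hv] at hone
      exact absurd hone (by decide)
    · rw [hpre p h1] at hv
      exact absurd hv (by decide)
  · -- fibers are equidistributed
    intro a b
    refine Finset.card_bij'
      (fun v _ => (⟨(v : Fin n → ZMod 3) + (b - a) • u,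
        V.add_mem v.2 (V.smul_mem _ huV)⟩ : V))
      (fun v _ => (⟨(v : Fin n → ZMod 3) + (a - b) • u,
        V.add_mem v.2 (V.smul_mem _ huV)⟩ : V)) ?_ ?_ ?_ ?_
    · intro v hv
      simp only [mem_filter, mem_univ, true_and] at hv ⊢
      simp [Pi.add_apply, Pi.smul_apply, smul_eq_mul, hv, hup]
    · intro v hv
      simp only [mem_filter, mem_univ, true_and] at hv ⊢
      simp [Pi.add_apply, Pi.smul_apply, smul_eq_mul, hv, hup]
    · intro v hv
      ext i
      simp only [Pi.add_apply, Pi.smul_apply, smul_eq_mul]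
      ring
    · intro v hv
      ext i
      simp only [Pi.add_apply, Pi.smul_apply, smul_eq_mul]
      ring
  · -- positivity of the cardinality
    exact Fintype.card_pos_iff.mpr ⟨⟨0, V.zero_mem⟩⟩
end
end
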